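/- Let V_0, V_1, V_2, V_3 be two-dimensional k-vector spaces with bases x_i, y_i, and let w = x_0 x_1 y_2 y_3 − y_0 x_1 x_2 y_3 − x_0 y_1 y_2 x_3 + y_0 y_1 x_2 x_3 ∈ V_0 ⊗ V_1 ⊗ V_2 ⊗ V_3 (the linear quintuple tensor). Then w is geometric: for each j ∈ {0,1,2,3} (mod 4) and all non-zero φ_j ∈ V_j^*, φ_{j+1} ∈ V_{j+1}^*, the contraction ⟨φ_j ⊗ φ_{j+1}, w⟩ ≠ 0. -/
import Mathlib


open Module

lemma aux_ne_zero_coord {k V : Type} [Field k] [AddCommGroup V] [Module k V]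
    (b : Basis (Fin 2) k V) {φ : Module.Dual k V} (h : φ ≠ 0) :
    φ (b 0) ≠ 0 ∨ φ (b 1) ≠ 0 := by
  by_contra hc
  push_neg at hc
  exact h (b.ext fun i => by fin_cases i <;> simp [hc.1, hc.2])

/-- the linear quintuple tensor
`w = x_0 x_1 y_2 y_3 − y_0 x_1 x_2 y_3 − x_0 y_1 y_2 x_3 + y_0 y_1 x_2 x_3` is geometric.
The 4-tensor `w ∈ V_0 ⊗ V_1 ⊗ V_2 ⊗ V_3` is represented, via the canonical identification
for finite dimensional spaces, as a 4-linear functional on the duals; the hypothesis `hw`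
expresses `w` in terms of the chosen bases `x_i, y_i` of the two-dimensional spaces `V_i`.
Geometricity: for each cyclically adjacent pair of slots and all non-zero functionals
`φ_j, φ_{j+1}`, the contraction `⟨φ_j ⊗ φ_{j+1}, w⟩` is non-zero. -/
theorem linear_quintuple_tensor_is_geometric
    (k V0 V1 V2 V3 : Type) [Field k]
    [AddCommGroup V0] [Module k V0] [FiniteDimensional k V0]
    [AddCommGroup V1] [Module k V1] [FiniteDimensional k V1]
    [AddCommGroup V2] [Module k V2] [FiniteDimensional k V2]
    [AddCommGroup V3] [Module k V3] [FiniteDimensional k V3]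
    (x0 y0 : V0) (x1 y1 : V1) (x2 y2 : V2) (x3 y3 : V3)
    (hb0 : ∃ b : Basis (Fin 2) k V0, b 0 = x0 ∧ b 1 = y0)
    (hb1 : ∃ b : Basis (Fin 2) k V1, b 0 = x1 ∧ b 1 = y1)
    (hb2 : ∃ b : Basis (Fin 2) k V2, b 0 = x2 ∧ b 1 = y2)
    (hb3 : ∃ b : Basis (Fin 2) k V3, b 0 = x3 ∧ b 1 = y3)
    (w : Dual k V0 →ₗ[k] Dual k V1 →ₗ[k] Dual k V2 →ₗ[k] Dual k V3 →ₗ[k] k)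
    (hw : ∀ (φ0 : Dual k V0) (φ1 : Dual k V1) (φ2 : Dual k V2) (φ3 : Dual k V3),
      w φ0 φ1 φ2 φ3 =
        φ0 x0 * φ1 x1 * φ2 y2 * φ3 y3
        - φ0 y0 * φ1 x1 * φ2 x2 * φ3 y3
        - φ0 x0 * φ1 y1 * φ2 y2 * φ3 x3
        + φ0 y0 * φ1 y1 * φ2 x2 * φ3 x3) :
    (∀ (φ0 : Dual k V0) (φ1 : Dual k V1), φ0 ≠ 0 → φ1 ≠ 0 →
      ∃ φ2 φ3, w φ0 φ1 φ2 φ3 ≠ 0) ∧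
    (∀ (φ1 : Dual k V1) (φ2 : Dual k V2), φ1 ≠ 0 → φ2 ≠ 0 →
      ∃ φ0 φ3, w φ0 φ1 φ2 φ3 ≠ 0) ∧
    (∀ (φ2 : Dual k V2) (φ3 : Dual k V3), φ2 ≠ 0 → φ3 ≠ 0 →
      ∃ φ0 φ1, w φ0 φ1 φ2 φ3 ≠ 0) ∧
    (∀ (φ3 : Dual k V3) (φ0 : Dual k V0), φ3 ≠ 0 → φ0 ≠ 0 →
      ∃ φ1 φ2, w φ0 φ1 φ2 φ3 ≠ 0) := by

  obtain ⟨b0, rfl, rfl⟩ := hb0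
  obtain ⟨b1, rfl, rfl⟩ := hb1
  obtain ⟨b2, rfl, rfl⟩ := hb2
  obtain ⟨b3, rfl, rfl⟩ := hb3
  refine ⟨?_, ?_, ?_, ?_⟩
  · intro φ0 φ1 h0 h1
    rcases aux_ne_zero_coord b0 h0 with ha | ha <;>
      rcases aux_ne_zero_coord b1 h1 with hp | hp
    · exact ⟨b2.coord 1, b3.coord 1, by
        rw [hw]; simp [Basis.coord_apply, Basis.repr_self]; exact ⟨ha, hp⟩⟩
    · exact ⟨b2.coord 1, b3.coord 0, by
        rw [hw]; simp [Basis.coord_apply, Basis.repr_self, sub_eq_zero]; exact ⟨ha, hp⟩⟩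
    · exact ⟨b2.coord 0, b3.coord 1, by
        rw [hw]; simp [Basis.coord_apply, Basis.repr_self, sub_eq_zero]; exact ⟨ha, hp⟩⟩
    · exact ⟨b2.coord 0, b3.coord 0, by
        rw [hw]; simp [Basis.coord_apply, Basis.repr_self]; exact ⟨ha, hp⟩⟩
  · intro φ1 φ2 h1 h2
    rcases aux_ne_zero_coord b1 h1 with hp | hp <;>
      rcases aux_ne_zero_coord b2 h2 with hc | hc
    · exact ⟨b0.coord 1, b3.coord 1, by
        rw [hw]; simp [Basis.coord_apply, Basis.repr_self, sub_eq_zero]; exact ⟨hp, hc⟩⟩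
    · exact ⟨b0.coord 0, b3.coord 1, by
        rw [hw]; simp [Basis.coord_apply, Basis.repr_self]; exact ⟨hp, hc⟩⟩
    · exact ⟨b0.coord 1, b3.coord 0, by
        rw [hw]; simp [Basis.coord_apply, Basis.repr_self]; exact ⟨hp, hc⟩⟩
    · exact ⟨b0.coord 0, b3.coord 0, by
        rw [hw]; simp [Basis.coord_apply, Basis.repr_self, sub_eq_zero]; exact ⟨hp, hc⟩⟩
  · intro φ2 φ3 h2 h3
    rcases aux_ne_zero_coord b2 h2 with hc | hc <;>
      rcases aux_ne_zero_coord b3 h3 with he | he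
    · exact ⟨b0.coord 1, b1.coord 1, by
        rw [hw]; simp [Basis.coord_apply, Basis.repr_self]; exact ⟨hc, he⟩⟩
    · exact ⟨b0.coord 1, b1.coord 0, by
        rw [hw]; simp [Basis.coord_apply, Basis.repr_self, sub_eq_zero]; exact ⟨hc, he⟩⟩
    · exact ⟨b0.coord 0, b1.coord 1, by
        rw [hw]; simp [Basis.coord_apply, Basis.repr_self, sub_eq_zero]; exact ⟨hc, he⟩⟩
    · exact ⟨b0.coord 0, b1.coord 0, by
        rw [hw]; simp [Basis.coord_apply, Basis.repr_self]; exact ⟨hc, he⟩⟩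
  · intro φ3 φ0 h3 h0
    rcases aux_ne_zero_coord b3 h3 with he | he <;>
      rcases aux_ne_zero_coord b0 h0 with ha | ha
    · exact ⟨b1.coord 1, b2.coord 1, by
        rw [hw]; simp [Basis.coord_apply, Basis.repr_self, sub_eq_zero]; exact ⟨ha, he⟩⟩
    · exact ⟨b1.coord 1, b2.coord 0, by
        rw [hw]; simp [Basis.coord_apply, Basis.repr_self]; exact ⟨ha, he⟩⟩
    · exact ⟨b1.coord 0, b2.coord 1, by
        rw [hw]; simp [Basis.coord_apply, Basis.repr_self]; exact ⟨ha, he⟩⟩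
    · exact ⟨b1.coord 0, b2.coord 0, by
        rw [hw]; simp [Basis.coord_apply, Basis.repr_self, sub_eq_zero]; exact ⟨ha, he⟩⟩
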